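/- Let G be a finite group with subgroups B, U and an element n₀, let k be a field, σ: U → k^× a homomorphism, M ⊆ kG𝔟 a kG-submodule, and suppose the subspace 𝔲_σ·(kG𝔟) is one-dimensional, spanned by 𝔲_σn₀𝔟. Then either kG·𝔲_σn₀𝔟 ⊆ M, or M ⊆ (kG·𝔲_{σ*}n₀𝔟)^⊥, where σ*(u) = σ(u)^{-1} and ⊥ is with respect to the standard G-invariant form on kG𝔟. -/

import Mathlib

open MonoidAlgebra

/-- The element `𝔟 = ∑_{b ∈ B} b` of the group algebra `kG`. -/
noncomputable def bSum (k : Type*) {G : Type*} [Field k] [Group G] (B : Subgroup G) [Fintype B] :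
    MonoidAlgebra k G :=
  ∑ b : B, of k G (b : G)

/-- The element `𝔲_σ = ∑_{u ∈ U} σ(u)·u` of the group algebra `kG`. -/
noncomputable def uSigma (k : Type*) {G : Type*} [Field k] [Group G] (U : Subgroup G)
    [Fintype U] (σ : U →* kˣ) : MonoidAlgebra k G :=
  ∑ u : U, ((σ u : kˣ) : k) • of k G (u : G)

/-- The element `a·𝔟` of the submodule `kG𝔟 = span {𝔟}`, for `a ∈ kG`. -/
noncomputable def elemS {k G : Type*} [Field k] [Group G] (B : Subgroup G) [Fintype B]
    (a : MonoidAlgebra k G) : ↥(Submodule.span (MonoidAlgebra k G) {bSum k B}) :=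
  ⟨a * bSum k B, by rw [← smul_eq_mul]
                    exact Submodule.smul_mem _ _ (Submodule.mem_span_singleton_self _)⟩

/-- Left multiplication by a group element on the submodule `kG𝔟`. -/
noncomputable def smulG {k G : Type*} [Field k] [Group G]
    (S : Submodule (MonoidAlgebra k G) (MonoidAlgebra k G)) (x : G) (a : ↥S) : ↥S :=
  ⟨of k G x * (a : MonoidAlgebra k G), by
    rw [← smul_eq_mul]; exact S.smul_mem _ a.2⟩

section Aux

variable {k G : Type*} [Field k] [Group G]
  {S : Submodule (MonoidAlgebra k G) (MonoidAlgebra k G)}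

lemma smulG_eq_smul (x : G) (a : ↥S) : smulG S x a = of k G x • a :=
  Subtype.ext rfl

lemma smulG_inv_smulG (x : G) (a : ↥S) : smulG S x⁻¹ (smulG S x a) = a := by
  apply Subtype.ext
  show of k G x⁻¹ * (of k G x * (a : MonoidAlgebra k G)) = a
  rw [← mul_assoc, ← map_mul, inv_mul_cancel, map_one, one_mul]

lemma adj1 (Φ : ↥S →ₗ[k] ↥S →ₗ[k] k)
    (hG : ∀ (x : G) a b, Φ (smulG S x a) (smulG S x b) = Φ a b)
    (x : G) (a b : ↥S) : Φ a (smulG S x b) = Φ (smulG S x⁻¹ a) b := by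
  have h := hG x⁻¹ a (smulG S x b)
  rw [smulG_inv_smulG] at h
  exact h.symm

lemma usmul_decomp (U : Subgroup G) [Fintype U] (τ : U →* kˣ) (v : ↥S) :
    (uSigma k U τ • v : ↥S) = ∑ u : U, ((τ u : kˣ) : k) • smulG S (u : G) v := by
  apply Subtype.ext
  rw [Submodule.coe_smul, smul_eq_mul, Submodule.coe_sum, uSigma, Finset.sum_mul]
  refine Finset.sum_congr rfl fun u _ => ?_
  rw [Submodule.coe_smul_of_tower, smul_mul_assoc]
  rfl

lemma adj_uSigma (U : Subgroup G) [Fintype U] (σ : U →* kˣ)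
    (Φ : ↥S →ₗ[k] ↥S →ₗ[k] k)
    (hG : ∀ (x : G) a b, Φ (smulG S x a) (smulG S x b) = Φ a b)
    (m w : ↥S) :
    Φ m (uSigma k U (MonoidHom.comp invMonoidHom σ) • w) = Φ (uSigma k U σ • m) w := by
  rw [usmul_decomp U _ w, usmul_decomp U σ m, map_sum (Φ m), map_sum Φ, LinearMap.sum_apply]
  refine Fintype.sum_equiv (Equiv.inv U) _ _ fun u => ?_
  simp only [Equiv.inv_apply, map_smul, LinearMap.smul_apply, adj1 Φ hG, map_inv,
    MonoidHom.comp_apply, invMonoidHom_apply, Units.val_inv_eq_inv_val, InvMemClass.coe_inv]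

lemma smul_decomp (a : MonoidAlgebra k G) (v : ↥S) :
    a • v = ∑ g ∈ a.coeff.support, a.coeff g • smulG S g v := by
  apply Subtype.ext
  rw [Submodule.coe_smul, smul_eq_mul, Submodule.coe_sum]
  conv_lhs => rw [← MonoidAlgebra.sum_coeff_single a, Finsupp.sum, Finset.sum_mul]
  refine Finset.sum_congr rfl fun g _ => ?_
  rw [Submodule.coe_smul_of_tower]
  show MonoidAlgebra.single g (a.coeff g) * _ = a.coeff g • (of k G g * (v : MonoidAlgebra k G))
  rw [← smul_mul_assoc, of_apply, MonoidAlgebra.smul_single', mul_one]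

end Aux


/-- The submodule-theorem dichotomy: if `𝔲_σ·(kG𝔟)` is one-dimensional, spanned by
`𝔲_σn₀𝔟`, then any `kG`-submodule `M` of `kG𝔟` satisfies `kG·𝔲_σn₀𝔟 ⊆ M` or
`M ⊆ (kG·𝔲_{σ*}n₀𝔟)^⊥`. -/
theorem submodule_dichotomy {k G : Type*} [Field k] [Group G] [Fintype G]
    (B U : Subgroup G) [Fintype B] [Fintype U] [DecidableEq (G ⧸ B)] (n₀ : G) (σ : U →* kˣ)
    (Φ : ↥(Submodule.span (MonoidAlgebra k G) {bSum k B}) →ₗ[k]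
        ↥(Submodule.span (MonoidAlgebra k G) {bSum k B}) →ₗ[k] k)
    (hΦ : ∀ g g' : G, Φ (elemS B (of k G g)) (elemS B (of k G g')) =
      if (g : G ⧸ B) = (g' : G ⧸ B) then 1 else 0)
    (hsymm : ∀ a b, Φ a b = Φ b a)
    (hG : ∀ (x : G) a b, Φ (smulG _ x a) (smulG _ x b) = Φ a b)
    (hspan : elemS B (uSigma k U σ * of k G n₀) ≠ 0)
    (hone : ∀ a : ↥(Submodule.span (MonoidAlgebra k G) {bSum k B}), ∃ c : k,
      uSigma k U σ * (a : MonoidAlgebra k G) =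
        c • ((elemS B (uSigma k U σ * of k G n₀) : MonoidAlgebra k G)))
    (M : Submodule (MonoidAlgebra k G) ↥(Submodule.span (MonoidAlgebra k G) {bSum k B})) :
    Submodule.span (MonoidAlgebra k G) {elemS B (uSigma k U σ * of k G n₀)} ≤ M ∨
      (∀ m ∈ M, ∀ x ∈ Submodule.span (MonoidAlgebra k G)
        {elemS B (uSigma k U (MonoidHom.comp invMonoidHom σ) * of k G n₀)}, Φ m x = 0) := by
  by_cases h : ∀ m ∈ M, uSigma k U σ • m = 0
  · right
    intro m hm x hx
    obtain ⟨a, rfl⟩ := Submodule.mem_span_singleton.mp hx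
    have hv' : elemS B (uSigma k U (MonoidHom.comp invMonoidHom σ) * of k G n₀)
        = uSigma k U (MonoidHom.comp invMonoidHom σ) • elemS B (of k G n₀) := by
      apply Subtype.ext
      show uSigma k U _ * of k G n₀ * bSum k B = uSigma k U _ * (of k G n₀ * bSum k B)
      rw [mul_assoc]
    rw [hv', smul_decomp, map_sum]
    refine Finset.sum_eq_zero fun g _ => ?_
    rw [map_smul]
    have hmem : smulG _ g⁻¹ m ∈ M := by
      rw [smulG_eq_smul]; exact M.smul_mem _ hm
    rw [adj1 Φ hG, adj_uSigma U σ Φ hG, h _ hmem, map_zero, LinearMap.zero_apply, smul_zero]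
  · left
    push_neg at h
    obtain ⟨m, hm, hne⟩ := h
    obtain ⟨c, hc⟩ := hone m
    have hc' : uSigma k U σ • m = c • elemS B (uSigma k U σ * of k G n₀) := by
      apply Subtype.ext
      rw [Submodule.coe_smul, smul_eq_mul, Submodule.coe_smul_of_tower]
      exact hc
    have hcne : c ≠ 0 := by
      rintro rfl
      rw [zero_smul] at hc'
      exact hne hc'
    have hv₀M : elemS B (uSigma k U σ * of k G n₀) ∈ M := by
      have h2 : c⁻¹ • (uSigma k U σ • m) ∈ M :=
        Submodule.smul_of_tower_mem M c⁻¹ (M.smul_mem _ hm)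
      rwa [hc', smul_smul, inv_mul_cancel₀ hcne, one_smul] at h2
    rw [Submodule.span_le, Set.singleton_subset_iff]
    exact hv₀M
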